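/- Let m ∈ ℕ and x ∈ X_m. Then there exists x̂ ∈ X_m such that 𝔖(x̂) = 𝔖(x), x − x̂ ∈ ℰ_m (i.e., x_i ≥ x̂_i for all i and the difference sequence is weakly increasing), x̂ depends only on 𝔖(x), and for every i ∈ [0,m−1] with x̂_i = x̂_{i+1} one has x_i − x̂_i = x_{i+1} − x̂_{i+1}. -/
import Mathlib


open Finset

/-- `X_m`: sequences `(x_0,…,x_m)` in `ℕ` with `x i ≤ x (i+1)` and `x i < x (i+2)`. -/
def IsX (m : ℕ) (x : ℕ → ℕ) : Prop :=
  (∀ i, i < m → x i ≤ x (i + 1)) ∧ (∀ i, i + 2 ≤ m → x i < x (i + 2))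

/-- `Y_m`: sequences with `y i ≤ y (i+1)` and `y i + 2 ≤ y (i+2)`. -/
def IsY (m : ℕ) (y : ℕ → ℕ) : Prop :=
  (∀ i, i < m → y i ≤ y (i + 1)) ∧ (∀ i, i + 2 ≤ m → y i + 2 ≤ y (i + 2))

/-- `ℰ_m`: weakly increasing sequences. -/
def IsE (m : ℕ) (e : ℕ → ℕ) : Prop := ∀ i, i < m → e i ≤ e (i + 1)

/-- `𝔖(x)`: indices `i ∈ [0,m]` with `x (i-1) < x i < x (i+1)`,
with conventions `x_{-1} = -∞`, `x_{m+1} = +∞`. -/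
def SS (m : ℕ) (x : ℕ → ℕ) : Finset ℕ :=
  (Finset.range (m + 1)).filter
    (fun i => (i = 0 ∨ x (i - 1) < x i) ∧ (i = m ∨ x i < x (i + 1)))

/-- `𝔉(y)`: intervals `[i,j] ⊆ [0,m]` with
`y_{i-1}-(i-1) < y_i-i = ⋯ = y_j-j < y_{j+1}-(j+1)` (conventions `±∞` at the ends),
encoded as pairs `(i, j)`. -/
def FF (m : ℕ) (y : ℕ → ℕ) : Finset (ℕ × ℕ) :=
  ((Finset.range (m + 1)) ×ˢ (Finset.range (m + 1))).filter
    (fun p => p.1 ≤ p.2 ∧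
      (p.1 = 0 ∨ ((y (p.1 - 1) : ℤ) - ((p.1 : ℤ) - 1) < (y p.1 : ℤ) - (p.1 : ℤ))) ∧
      (p.2 = m ∨ ((y p.2 : ℤ) - (p.2 : ℤ) < (y (p.2 + 1) : ℤ) - ((p.2 : ℤ) + 1))) ∧
      (∀ k ∈ Finset.Ico p.1 p.2, ((y k : ℤ) - (k : ℤ) = (y (k + 1) : ℤ) - ((k : ℤ) + 1))))

/-- `𝔉'(y)`: the intervals in `𝔉(y)` of odd cardinality. -/
def FF' (m : ℕ) (y : ℕ → ℕ) : Finset (ℕ × ℕ) :=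
  (FF m y).filter (fun p => Odd (p.2 - p.1 + 1))

/-- `R(y)`: endpoints of intervals in `𝔉(y)`. -/
def RR (m : ℕ) (y : ℕ → ℕ) : Finset ℕ :=
  (Finset.range (m + 1)).filter (fun k => ∃ p ∈ FF m y, k = p.1 ∨ k = p.2)

/-- `R_0(y)`: those `k` with `[k,k] ∈ 𝔉(y)`. -/
def RR0 (m : ℕ) (y : ℕ → ℕ) : Finset ℕ :=
  (Finset.range (m + 1)).filter (fun k => (k, k) ∈ FF m y)

/-- `S(y)`: pairs `(x, x') ∈ X_m × X_m` with `x + x' = y`,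
`𝔖(x) ∪ 𝔖(x') = R(y)`, `𝔖(x) ∩ 𝔖(x') = R_0(y)`, and `𝔖(x') = ∅` if `𝔉'(y) = ∅`. -/
def IsS (m : ℕ) (y x x' : ℕ → ℕ) : Prop :=
  IsX m x ∧ IsX m x' ∧ (∀ i, i ≤ m → x i + x' i = y i) ∧
  SS m x ∪ SS m x' = RR m y ∧ SS m x ∩ SS m x' = RR0 m y ∧
  (FF' m y = ∅ → SS m x' = ∅)

/-- Count of indices `≤ i` not in `S`. -/
def cntN (S : Finset ℕ) (i : ℕ) : ℕ :=
  ((Finset.range (i + 1)).filter (fun j => j ∉ S)).card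

/-- Lusztig's minimal element determined by `S`. -/
def hatFn (S : Finset ℕ) (i : ℕ) : ℕ := i - cntN S i / 2

lemma cntN_succ (S : Finset ℕ) (i : ℕ) :
    cntN S (i + 1) = cntN S i + (if (i + 1) ∈ S then 0 else 1) := by
  unfold cntN
  rw [Finset.range_add_one, Finset.filter_insert]
  by_cases h : (i + 1) ∈ S
  · rw [if_neg (by simp [h]), if_pos h]
    simp
  · rw [if_pos (by simp [h]), if_neg h,
      Finset.card_insert_of_notMem (by simp)]

lemma cntN_le (S : Finset ℕ) (i : ℕ) : cntN S i ≤ i + 1 :=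
  le_trans (Finset.card_filter_le _ _) (by simp)

lemma mem_SS {m i : ℕ} {x : ℕ → ℕ} :
    i ∈ SS m x ↔ i ≤ m ∧ (i = 0 ∨ x (i - 1) < x i) ∧ (i = m ∨ x i < x (i + 1)) := by
  simp [SS, Nat.lt_succ_iff, and_assoc]

theorem stmt17 (m : ℕ) :
    ∃ hat : Finset ℕ → ℕ → ℕ, ∀ x : ℕ → ℕ, IsX m x →
      IsX m (hat (SS m x)) ∧
      SS m (hat (SS m x)) = SS m x ∧
      (∀ i, i ≤ m → hat (SS m x) i ≤ x i) ∧
      IsE m (fun i => x i - hat (SS m x) i) ∧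
      (∀ i, i < m → hat (SS m x) i = hat (SS m x) (i + 1) →
        x i - hat (SS m x) i = x (i + 1) - hat (SS m x) (i + 1)) := by
  refine ⟨hatFn, ?_⟩
  intro x hx
  obtain ⟨hx1, hx2⟩ := hx
  set S := SS m x with hS
  have hmem : ∀ i, i ∈ S ↔ i ≤ m ∧ (i = 0 ∨ x (i - 1) < x i) ∧ (i = m ∨ x i < x (i + 1)) :=
    fun i => mem_SS
  -- parity invariant
  have hpar : ∀ i, i ≤ m → (cntN S i % 2 = 1 ↔ (i < m ∧ x i = x (i + 1))) := by
    intro i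
    induction i with
    | zero =>
      intro _
      have h0 : cntN S 0 = if 0 ∈ S then 0 else 1 := by
        by_cases h : (0 : ℕ) ∈ S <;> simp [cntN, Finset.range_one, Finset.filter_singleton, h]
      have hm0 : (0 : ℕ) ∈ S ↔ ((0 : ℕ) = m ∨ x 0 < x 1) := by
        rw [hmem]; norm_num
      have hle0 : 0 < m → x 0 ≤ x 1 := fun hm => hx1 0 hm
      have hnorm : x (0 + 1) = x 1 := rfl
      by_cases h : (0 : ℕ) ∈ S
      · rw [h0, if_pos h]
        rw [hm0] at h
        constructor
        · omega
        · rintro ⟨hm, heq⟩; rcases h with h | h <;> omega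
      · rw [h0, if_neg h]
        rw [hm0] at h; push_neg at h
        constructor
        · intro _; exact ⟨by omega, by have := hle0 (by omega); omega⟩
        · intro _; rfl
    | succ i ih =>
      intro hi1
      have ih' := ih (by omega)
      have hrec2 := cntN_succ S i
      have hnorm : x (i + 1 + 1) = x (i + 2) := rfl
      have hxi : x i ≤ x (i + 1) := hx1 i (by omega)
      by_cases hmem1 : (i + 1) ∈ S
      · rw [if_pos hmem1] at hrec2
        rw [hmem] at hmem1
        have hm2 := hmem1.2.2
        constructor
        · intro hodd
          -- cntN (i+1) odd, = cntN i, so cntN i odd, so x i = x (i+1); but then i+1 ∈ S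
          -- requires x i < x (i+1), contradiction... derive via ih'
          have : cntN S i % 2 = 1 := by omega
          have h3 := ih'.1 this
          have h4 := hmem1.2.1
          simp only [Nat.add_sub_cancel] at h4
          rcases h4 with h4 | h4 <;> omega
        · rintro ⟨hm, heq⟩
          rcases hm2 with h | h <;> omega
      · have h2 : ¬ ((i + 1 = 0 ∨ x (i + 1 - 1) < x (i + 1)) ∧ (i + 1 = m ∨ x (i + 1) < x (i + 1 + 1))) := by
          intro hc; exact hmem1 ((hmem (i + 1)).2 ⟨hi1, hc.1, hc.2⟩)
        rw [if_neg hmem1] at hrec2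
        simp only [Nat.add_sub_cancel] at h2
        by_cases heq : x i = x (i + 1)
        · -- cntN i odd, so cntN (i+1) even; need RHS false: x (i+1) < x (i+2) or i+1 = m
          have hodd : cntN S i % 2 = 1 := ih'.2 ⟨by omega, heq⟩
          constructor
          · intro h; omega
          · rintro ⟨hm, heq2⟩
            have := hx2 i (by omega)
            omega
        · have heven : cntN S i % 2 = 0 := by
            have := ih'.1
            by_contra hc
            have h3 := this (by omega)
            exact heq h3.2
          -- i+1 ∉ S and x i < x (i+1): so the second clause fails: i+1 ≠ m ∧ x(i+1) = x(i+2)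
          have hlt : x i < x (i + 1) := lt_of_le_of_ne hxi heq
          have h3 : ¬ (i + 1 = m ∨ x (i + 1) < x (i + 1 + 1)) := by
            intro hc; exact h2 ⟨Or.inr hlt, hc⟩
          push_neg at h3
          have hle2 : i + 1 < m → x (i + 1) ≤ x (i + 2) := fun h => hx1 (i + 1) h
          constructor
          · intro _
            refine ⟨by omega, ?_⟩
            have := hle2 (by omega)
            omega
          · intro _; omega
  -- step lemma
  have hstep : ∀ i, i < m →
      (x i = x (i + 1) ∧ hatFn S (i + 1) = hatFn S i) ∨
      (x i < x (i + 1) ∧ hatFn S (i + 1) = hatFn S i + 1) := by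
    intro i hi
    have h1 := hpar i (by omega)
    have h2 := cntN_succ S i
    have h3 := cntN_le S i
    have hxi : x i ≤ x (i + 1) := hx1 i hi
    by_cases heq : x i = x (i + 1)
    · left
      refine ⟨heq, ?_⟩
      have hodd : cntN S i % 2 = 1 := h1.2 ⟨hi, heq⟩
      have hns : (i + 1) ∉ S := by
        rw [hmem]
        rintro ⟨-, hl, -⟩
        simp only [Nat.add_sub_cancel] at hl
        rcases hl with hl | hl <;> omega
      rw [if_neg hns] at h2
      simp only [hatFn]
      omega
    · right
      refine ⟨lt_of_le_of_ne hxi heq, ?_⟩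
      have heven : cntN S i % 2 = 0 := by
        by_contra hc
        exact heq (h1.1 (by omega)).2
      simp only [hatFn]
      by_cases hns : (i + 1) ∈ S <;> simp [hns] at h2 <;> omega
  have hiff : ∀ j, j < m → (hatFn S j < hatFn S (j + 1) ↔ x j < x (j + 1)) := by
    intro j hj
    rcases hstep j hj with ⟨h1, h2⟩ | ⟨h1, h2⟩ <;> constructor <;> intro h <;> omega
  have hat0 : hatFn S 0 = 0 := by simp [hatFn]
  have hle : ∀ i, i ≤ m → hatFn S i ≤ x i := by
    intro i
    induction i with
    | zero => intro _; rw [hat0]; exact Nat.zero_le _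
    | succ i ih =>
      intro h
      have h1 := ih (by omega)
      rcases hstep i (by omega) with ⟨ha, hb⟩ | ⟨ha, hb⟩ <;> omega
  refine ⟨⟨?_, ?_⟩, ?_, hle, ?_, ?_⟩
  · intro i hi
    rcases hstep i hi with ⟨h1, h2⟩ | ⟨h1, h2⟩ <;> omega
  · intro i hi
    have e1 : x (i + 1 + 1) = x (i + 2) := rfl
    have e2 : hatFn S (i + 1 + 1) = hatFn S (i + 2) := rfl
    rcases hstep i (by omega) with ⟨h1, h2⟩ | ⟨h1, h2⟩ <;>
      rcases hstep (i + 1) (by omega) with ⟨h3, h4⟩ | ⟨h3, h4⟩ <;>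
      have := hx2 i hi <;> omega
  · ext i
    rw [mem_SS, hmem i]
    constructor
    · rintro ⟨h0, h1, h2⟩
      refine ⟨h0, ?_, ?_⟩
      · rcases h1 with h1 | h1
        · exact Or.inl h1
        · rcases Nat.eq_zero_or_pos i with hz | hz
          · exact Or.inl hz
          · obtain ⟨j, rfl⟩ : ∃ j, i = j + 1 := ⟨i - 1, by omega⟩
            simp only [Nat.add_sub_cancel] at h1 ⊢
            exact Or.inr ((hiff j (by omega)).1 h1)
      · rcases h2 with h2 | h2
        · exact Or.inl h2
        · rcases eq_or_lt_of_le h0 with hz | hz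
          · exact Or.inl hz
          · exact Or.inr ((hiff i hz).1 h2)
    · rintro ⟨h0, h1, h2⟩
      refine ⟨h0, ?_, ?_⟩
      · rcases h1 with h1 | h1
        · exact Or.inl h1
        · rcases Nat.eq_zero_or_pos i with hz | hz
          · exact Or.inl hz
          · obtain ⟨j, rfl⟩ : ∃ j, i = j + 1 := ⟨i - 1, by omega⟩
            simp only [Nat.add_sub_cancel] at h1 ⊢
            exact Or.inr ((hiff j (by omega)).2 h1)
      · rcases h2 with h2 | h2
        · exact Or.inl h2
        · rcases eq_or_lt_of_le h0 with hz | hz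
          · exact Or.inl hz
          · exact Or.inr ((hiff i hz).2 h2)
  · intro i hi
    have h1 := hle i (by omega)
    have h2 := hle (i + 1) (by omega)
    rcases hstep i hi with ⟨ha, hb⟩ | ⟨ha, hb⟩ <;> simp only [] <;> omega
  · intro i hi heq
    have h1 := hle i (by omega)
    have h2 := hle (i + 1) (by omega)
    rcases hstep i hi with ⟨ha, hb⟩ | ⟨ha, hb⟩ <;> omega
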